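/- arXiv:2402.03864 — 3 statements merged into one kernel-verified Lean document; each statement's English description precedes it below -/
import Mathlib

section
/- (Continuous-time core of Theorem 4.1.) Let F : ℝ^p → ℝ^n be a differentiable map between Euclidean spaces, y ∈ ℝ^n, L(θ) = ½‖F(θ) − y‖², and let θ : ℝ → ℝ^p be differentiable with θ′(t) = −∇L(θ(t)) for every t. Let T > 0 and μ > 0, and suppose that for every t ∈ [0,T] and every v ∈ ℝ^n one has ⟨v, K(t)v⟩ ≥ μ‖v‖², where K(t) = J(θ(t))∘J(θ(t))*. Then for every t ∈ [0,T], ‖F(θ(t)) − y‖ ≤ e^{−μt}‖F(θ(0)) − y‖; equivalently L(θ(t)) ≤ e^{−2μt} L(θ(0)). -/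
open RealInnerProductSpace

lemma grad_lsq {p n : ℕ} (F : EuclideanSpace ℝ (Fin p) → EuclideanSpace ℝ (Fin n))
    (hF : Differentiable ℝ F) (y : EuclideanSpace ℝ (Fin n)) (ϑ : EuclideanSpace ℝ (Fin p)) :
    HasGradientAt (fun ϑ => (1 / 2 : ℝ) * ‖F ϑ - y‖ ^ 2)
      ((ContinuousLinearMap.adjoint (fderiv ℝ F ϑ)) (F ϑ - y)) ϑ := by
  rw [hasGradientAt_iff_hasFDerivAt]
  have hG : HasFDerivAt (fun ϑ => F ϑ - y) (fderiv ℝ F ϑ) ϑ :=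
    ((hF ϑ).hasFDerivAt).sub_const y
  have h1 := hG.norm_sq.const_mul (1 / 2 : ℝ)
  convert h1.congr_fderiv ?_ using 0
  ext v
  simp [ContinuousLinearMap.adjoint_inner_left, real_inner_smul_left, two_smul]
  ring

/-- Continuous-time convergence of gradient flow for the least-squares loss under a
uniform lower bound `μ` on the tangent kernel `K(t) = J(t) ∘ J(t)*` along the
trajectory: `‖F(θ(t)) − y‖ ≤ e^{−μt}‖F(θ(0)) − y‖`, equivalently
`L(θ(t)) ≤ e^{−2μt} L(θ(0))`. -/
theorem gradient_flow_exponential_convergence {p n : ℕ}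
    (F : EuclideanSpace ℝ (Fin p) → EuclideanSpace ℝ (Fin n))
    (hF : Differentiable ℝ F)
    (y : EuclideanSpace ℝ (Fin n))
    (θ : ℝ → EuclideanSpace ℝ (Fin p))
    (hθ : ∀ t : ℝ,
      HasDerivAt θ (-(gradient (fun ϑ => (1 / 2 : ℝ) * ‖F ϑ - y‖ ^ 2) (θ t))) t)
    (T μ : ℝ) (hT : 0 < T) (hμ : 0 < μ)
    (hK : ∀ t ∈ Set.Icc (0 : ℝ) T, ∀ v : EuclideanSpace ℝ (Fin n),
      ⟪v, ((fderiv ℝ F (θ t)).comp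
          (ContinuousLinearMap.adjoint (fderiv ℝ F (θ t)))) v⟫ ≥ μ * ‖v‖ ^ 2) :
    ∀ t ∈ Set.Icc (0 : ℝ) T,
      ‖F (θ t) - y‖ ≤ Real.exp (-μ * t) * ‖F (θ 0) - y‖ ∧
      (1 / 2 : ℝ) * ‖F (θ t) - y‖ ^ 2 ≤
        Real.exp (-(2 * μ) * t) * ((1 / 2 : ℝ) * ‖F (θ 0) - y‖ ^ 2) := by
  set r : ℝ → EuclideanSpace ℝ (Fin n) := fun t => F (θ t) - y with hr
  set g : ℝ → ℝ := fun t => ‖r t‖ ^ 2 with hg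
  have hθ' : ∀ t : ℝ, HasDerivAt θ
      (-(ContinuousLinearMap.adjoint (fderiv ℝ F (θ t)) (r t))) t := by
    intro t
    have h := hθ t
    rw [(grad_lsq F hF y (θ t)).gradient] at h
    exact h
  have hrd : ∀ t : ℝ, HasDerivAt r
      ((fderiv ℝ F (θ t)) (-(ContinuousLinearMap.adjoint (fderiv ℝ F (θ t)) (r t)))) t := by
    intro t
    have h1 : HasDerivAt (fun t => F (θ t))
        ((fderiv ℝ F (θ t)) (-(ContinuousLinearMap.adjoint (fderiv ℝ F (θ t)) (r t)))) t :=
      (hF (θ t)).hasFDerivAt.comp_hasDerivAt t (hθ' t)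
    simpa [hr] using h1.sub_const y
  have hgd : ∀ t : ℝ, HasDerivAt g
      (2 * ⟪r t, (fderiv ℝ F (θ t)) (-(ContinuousLinearMap.adjoint (fderiv ℝ F (θ t)) (r t)))⟫) t :=
    fun t => (hrd t).norm_sq
  have hineq : ∀ t ∈ Set.Icc (0 : ℝ) T,
      2 * ⟪r t, (fderiv ℝ F (θ t)) (-(ContinuousLinearMap.adjoint (fderiv ℝ F (θ t)) (r t)))⟫
        ≤ -(2 * μ) * g t := by
    intro t ht
    have hk := hK t ht (r t)
    have heq : ⟪r t, (fderiv ℝ F (θ t)) (-(ContinuousLinearMap.adjoint (fderiv ℝ F (θ t)) (r t)))⟫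
        = -⟪r t, ((fderiv ℝ F (θ t)).comp (ContinuousLinearMap.adjoint (fderiv ℝ F (θ t)))) (r t)⟫ := by
      simp [inner_neg_right]
    rw [heq]
    simp only [hg]
    nlinarith [hk]
  set φ : ℝ → ℝ := fun t => g t * Real.exp (2 * μ * t) with hφ
  have hφd : ∀ t : ℝ, HasDerivAt φ
      ((2 * ⟪r t, (fderiv ℝ F (θ t)) (-(ContinuousLinearMap.adjoint (fderiv ℝ F (θ t)) (r t)))⟫)
        * Real.exp (2 * μ * t) + g t * (2 * μ * Real.exp (2 * μ * t))) t := by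
    intro t
    have he : HasDerivAt (fun t : ℝ => Real.exp (2 * μ * t)) (2 * μ * Real.exp (2 * μ * t)) t := by
      have := ((hasDerivAt_id t).const_mul (2 * μ)).exp
      simpa [mul_comm] using this
    exact (hgd t).mul he
  have hanti : AntitoneOn φ (Set.Icc 0 T) := by
    apply antitoneOn_of_deriv_nonpos (convex_Icc 0 T)
    · exact fun t _ => ((hφd t).differentiableAt.continuousAt).continuousWithinAt
    · exact fun t _ => (hφd t).differentiableAt.differentiableWithinAt
    · intro t ht
      rw [interior_Icc] at ht
      rw [(hφd t).deriv]
      have h1 := hineq t (Set.mem_Icc.mpr ⟨le_of_lt ht.1, le_of_lt ht.2⟩)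
      have h2 : (0:ℝ) < Real.exp (2 * μ * t) := Real.exp_pos _
      have h3 : 0 ≤ g t := sq_nonneg _
      nlinarith
  intro t ht
  have h0 : (0:ℝ) ∈ Set.Icc (0:ℝ) T := Set.mem_Icc.mpr ⟨le_refl 0, le_of_lt hT⟩
  have key : g t * Real.exp (2 * μ * t) ≤ g 0 := by
    have := hanti h0 ht ht.1
    simpa [hφ] using this
  have hexp : (0:ℝ) < Real.exp (2 * μ * t) := Real.exp_pos _
  have hgkey : g t ≤ Real.exp (-(2 * μ) * t) * g 0 := by
    have heq : Real.exp (-(2 * μ) * t) * g 0 = g 0 / Real.exp (2 * μ * t) := by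
      rw [neg_mul, Real.exp_neg]; ring
    rw [heq, le_div_iff₀ hexp]
    exact key
  constructor
  · have eexp : Real.exp (-μ * t) ^ 2 = Real.exp (-(2 * μ) * t) := by
      rw [sq, ← Real.exp_add]; congr 1; ring
    have hsq : ‖r t‖ ^ 2 ≤ (Real.exp (-μ * t) * ‖r 0‖) ^ 2 := by
      rw [mul_pow, eexp]; exact hgkey
    have h1 : (0:ℝ) ≤ Real.exp (-μ * t) * ‖r 0‖ :=
      mul_nonneg (Real.exp_pos _).le (norm_nonneg _)
    have := Real.sqrt_le_sqrt hsq
    rwa [Real.sqrt_sq (norm_nonneg _), Real.sqrt_sq h1] at this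
  · simp only [hg] at hgkey ⊢
    nlinarith [hgkey]
end

section
/- (Full-rank Gauss–Newton flow, convergence part of Theorem 4.2.) Let F : ℝ^p → ℝ^n be a differentiable map between Euclidean spaces, y ∈ ℝ^n, and θ : ℝ → ℝ^p differentiable. For each t write J(t) for the Fréchet derivative of F at θ(t) and J(t)* for its adjoint. Suppose that for every t ∈ ℝ there is a linear map G(t) : ℝ^n → ℝ^n with G(t)∘(J(t)∘J(t)*) = id = (J(t)∘J(t)*)∘G(t) (i.e. J(t)J(t)* is invertible, equivalently J(t) is surjective), and that θ′(t) = −J(t)*(G(t)(F(θ(t)) − y)) for all t (the Gauss–Newton flow θ′ = −(JᵀJ)^†∇L in the full-rank case). Then F(θ(t)) − y = e^{−t}·(F(θ(0)) − y) for all t ≥ 0; in particular the loss L(θ(t)) = ½‖F(θ(t)) − y‖² equals e^{−2t}L(θ(0)) and tends to 0, so convergence to a global minimum is attained. -/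
/-- Full-rank Gauss–Newton flow: if `J(t)J(t)*` is invertible for all `t` and
`θ′(t) = −J(t)* (J(t)J(t)*)⁻¹ (F(θ(t)) − y)`, then the residual decays exactly
exponentially, `F(θ(t)) − y = e^{−t}(F(θ(0)) − y)`, and the loss tends to `0`. -/
theorem gaussNewton_flow_fullRank_convergence {p n : ℕ}
    (F : EuclideanSpace ℝ (Fin p) → EuclideanSpace ℝ (Fin n))
    (hF : Differentiable ℝ F)
    (y : EuclideanSpace ℝ (Fin n))
    (θ : ℝ → EuclideanSpace ℝ (Fin p))
    (hθ : Differentiable ℝ θ)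
    (hflow : ∀ t : ℝ,
      ∃ G : EuclideanSpace ℝ (Fin n) →L[ℝ] EuclideanSpace ℝ (Fin n),
        G.comp ((fderiv ℝ F (θ t)).comp
          (ContinuousLinearMap.adjoint (fderiv ℝ F (θ t)))) = ContinuousLinearMap.id ℝ _ ∧
        ((fderiv ℝ F (θ t)).comp
          (ContinuousLinearMap.adjoint (fderiv ℝ F (θ t)))).comp G = ContinuousLinearMap.id ℝ _ ∧
        HasDerivAt θ
          (-(ContinuousLinearMap.adjoint (fderiv ℝ F (θ t)) (G (F (θ t) - y)))) t) :
    ∀ t : ℝ, 0 ≤ t →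
      F (θ t) - y = Real.exp (-t) • (F (θ 0) - y) ∧
      (1 / 2 : ℝ) * ‖F (θ t) - y‖ ^ 2 =
        Real.exp (-(2 * t)) * ((1 / 2 : ℝ) * ‖F (θ 0) - y‖ ^ 2) := by
  set r : ℝ → EuclideanSpace ℝ (Fin n) := fun t => F (θ t) - y with hr
  have hr' : ∀ t : ℝ, HasDerivAt r (-(r t)) t := by
    intro t
    obtain ⟨G, hG1, hG2, hθ'⟩ := hflow t
    have h1 : HasDerivAt (fun s => F (θ s))
        ((fderiv ℝ F (θ t)) (-(ContinuousLinearMap.adjoint (fderiv ℝ F (θ t))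
          (G (F (θ t) - y))))) t :=
      ((hF (θ t)).hasFDerivAt).comp_hasDerivAt t hθ'
    have key : (fderiv ℝ F (θ t)) (-(ContinuousLinearMap.adjoint (fderiv ℝ F (θ t))
        (G (F (θ t) - y)))) = -(r t) := by
      rw [map_neg]
      have := congrArg (fun (L : EuclideanSpace ℝ (Fin n) →L[ℝ] EuclideanSpace ℝ (Fin n)) =>
        L (F (θ t) - y)) hG2
      simpa [ContinuousLinearMap.comp_apply, hr] using congrArg Neg.neg this
    rw [key] at h1
    simpa [hr] using h1.sub_const y
  -- g t = exp t • r t has zero derivative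
  set g : ℝ → EuclideanSpace ℝ (Fin n) := fun t => Real.exp t • r t with hg
  have hg' : ∀ t : ℝ, HasDerivAt g 0 t := by
    intro t
    have h := (Real.hasDerivAt_exp t).smul (hr' t)
    exact h.congr_deriv (by simp [smul_neg])
  have hgc : ∀ t : ℝ, g t = g 0 := by
    intro t
    have hdiff : Differentiable ℝ g := fun x => (hg' x).differentiableAt
    have hderiv : ∀ x, deriv g x = 0 := fun x => (hg' x).deriv
    exact is_const_of_deriv_eq_zero hdiff hderiv t 0
  intro t ht
  have hgt := hgc t
  have hrt : r t = Real.exp (-t) • (r 0) := by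
    have : Real.exp t • r t = r 0 := by simpa [hg] using hgt
    calc r t = (Real.exp (-t) * Real.exp t) • r t := by
          rw [← Real.exp_add]; simp
      _ = Real.exp (-t) • (Real.exp t • r t) := by rw [mul_smul]
      _ = Real.exp (-t) • (r 0) := by rw [this]
  refine ⟨hrt, ?_⟩
  have hrt' : F (θ t) - y = Real.exp (-t) • (F (θ 0) - y) := hrt
  rw [hrt', norm_smul]
  simp only [Real.norm_eq_abs, abs_of_pos (Real.exp_pos _)]
  rw [mul_pow]
  have : Real.exp (-t) ^ 2 = Real.exp (-(2 * t)) := by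
    rw [← Real.exp_nat_mul]; ring_nf
  rw [this]; ring
end

section
/- (Hessian of the network output is O(1/√m).) Fix d ≥ 1, C > 0, and a twice continuously differentiable σ : ℝ → ℝ with |σ′(y)| ≤ C and |σ″(y)| ≤ C for all y ∈ ℝ. Then there exists a constant K > 0, depending only on C and d (and not on m), with the following property: for every m ≥ 1, every x ∈ ℝ^d with ‖x‖ ≤ 1, and every parameter vector θ = (W¹, W⁰, b⁰, b¹) ∈ ℝ^m × (ℝ^d)^m × ℝ^m × ℝ all of whose entries are bounded in absolute value by C, the second Fréchet derivative at θ of the map θ ↦ u_θ(x) = (1/√m) Σ_{j=1}^m W¹_j σ(⟨W⁰_j, x⟩ + b⁰_j) + b¹, computed with respect to the Euclidean (ℓ²) norm on the concatenation of all m(d+2)+1 parameters, has norm at most K/√m. -/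
namespace NetHess
variable {m d : ℕ}

abbrev E (m d : ℕ) := EuclideanSpace ℝ (Fin m ⊕ (Fin m × Fin d) ⊕ Fin m ⊕ Unit)

noncomputable def LA (m d : ℕ) (j : Fin m) : E m d →L[ℝ] ℝ := EuclideanSpace.proj (Sum.inl j)
noncomputable def LC (m d : ℕ) (j : Fin m) : E m d →L[ℝ] ℝ :=
  EuclideanSpace.proj (Sum.inr (Sum.inr (Sum.inl j)))
noncomputable def LD (m d : ℕ) : E m d →L[ℝ] ℝ :=
  EuclideanSpace.proj (Sum.inr (Sum.inr (Sum.inr ())))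
noncomputable def LL (m d : ℕ) (x : EuclideanSpace ℝ (Fin d)) (j : Fin m) : E m d →L[ℝ] ℝ :=
  (∑ i : Fin d, x i • (EuclideanSpace.proj (Sum.inr (Sum.inl (j, i))) : E m d →L[ℝ] ℝ)) + LC m d j

lemma LL_apply (x : EuclideanSpace ℝ (Fin d)) (j : Fin m) (u : E m d) :
    LL m d x j u = (∑ i : Fin d, x i * u (Sum.inr (Sum.inl (j, i)))) +
      u (Sum.inr (Sum.inr (Sum.inl j))) := by
  simp [LL, LC]

noncomputable def net (c : ℝ) (σ : ℝ → ℝ) (x : EuclideanSpace ℝ (Fin d)) (ϑ : E m d) : ℝ :=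
  c * ∑ j : Fin m, LA m d j ϑ * σ (LL m d x j ϑ) + LD m d ϑ

noncomputable def F1 (c : ℝ) (σ : ℝ → ℝ) (x : EuclideanSpace ℝ (Fin d)) (ϑ : E m d) :
    E m d →L[ℝ] ℝ :=
  c • (∑ j : Fin m,
      (LA m d j ϑ • (deriv σ (LL m d x j ϑ) • LL m d x j) + σ (LL m d x j ϑ) • LA m d j)) +
    LD m d

lemma hasFDerivAt_net {σ : ℝ → ℝ} (hσ : ContDiff ℝ 2 σ) (c : ℝ) (x : EuclideanSpace ℝ (Fin d))
    (ϑ : E m d) : HasFDerivAt (net c σ x) (F1 c σ x ϑ) ϑ := by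
  have hdσ : ∀ y, HasDerivAt σ (deriv σ y) y := fun y =>
    ((hσ.differentiable two_ne_zero) y).hasDerivAt
  have hj : ∀ j : Fin m, HasFDerivAt (fun ϑ : E m d => LA m d j ϑ * σ (LL m d x j ϑ))
      (LA m d j ϑ • (deriv σ (LL m d x j ϑ) • LL m d x j) + σ (LL m d x j ϑ) • LA m d j) ϑ :=
    fun j => ((LA m d j).hasFDerivAt).mul
      ((hdσ _).comp_hasFDerivAt ϑ (LL m d x j).hasFDerivAt)
  have hsum := HasFDerivAt.fun_sum (fun j (_ : j ∈ Finset.univ) => hj j)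
  exact (hsum.const_mul c).add (LD m d).hasFDerivAt

noncomputable def F2 (c : ℝ) (σ : ℝ → ℝ) (x : EuclideanSpace ℝ (Fin d)) (θ : E m d) :
    E m d →L[ℝ] E m d →L[ℝ] ℝ :=
  c • ∑ j : Fin m,
    ((LA m d j θ • (deriv σ (LL m d x j θ) • (0 : E m d →L[ℝ] E m d →L[ℝ] ℝ) +
        ((deriv (deriv σ) (LL m d x j θ)) • LL m d x j).smulRight (LL m d x j)) +
      (LA m d j).smulRight (deriv σ (LL m d x j θ) • LL m d x j)) +
     (σ (LL m d x j θ) • (0 : E m d →L[ℝ] E m d →L[ℝ] ℝ) +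
      ((deriv σ (LL m d x j θ)) • LL m d x j).smulRight (LA m d j)))

lemma hasFDerivAt_F1 {σ : ℝ → ℝ} (hσ : ContDiff ℝ 2 σ) (c : ℝ) (x : EuclideanSpace ℝ (Fin d))
    (θ : E m d) : HasFDerivAt (F1 c σ x) (F2 c σ x θ) θ := by
  have hdσ : ∀ y, HasDerivAt σ (deriv σ y) y := fun y =>
    ((hσ.differentiable two_ne_zero) y).hasDerivAt
  have hσ1 : ContDiff ℝ 1 (deriv σ) := by
    have h2 : ContDiff ℝ ((1 : ℕ) + 1) σ := by exact_mod_cast hσ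
    exact (contDiff_succ_iff_deriv.mp (by exact_mod_cast h2)).2.2
  have hdσ' : ∀ y, HasDerivAt (deriv σ) (deriv (deriv σ) y) y := fun y =>
    ((hσ1.differentiable one_ne_zero) y).hasDerivAt
  have hj : ∀ j : Fin m, HasFDerivAt
      (fun ϑ : E m d =>
        LA m d j ϑ • (deriv σ (LL m d x j ϑ) • LL m d x j) + σ (LL m d x j ϑ) • LA m d j)
      ((LA m d j θ • (deriv σ (LL m d x j θ) • (0 : E m d →L[ℝ] E m d →L[ℝ] ℝ) +
          ((deriv (deriv σ) (LL m d x j θ)) • LL m d x j).smulRight (LL m d x j)) +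
        (LA m d j).smulRight (deriv σ (LL m d x j θ) • LL m d x j)) +
       (σ (LL m d x j θ) • (0 : E m d →L[ℝ] E m d →L[ℝ] ℝ) +
        ((deriv σ (LL m d x j θ)) • LL m d x j).smulRight (LA m d j))) θ := by
    intro j
    have hw : HasFDerivAt (fun ϑ : E m d => deriv σ (LL m d x j ϑ) • LL m d x j)
        (deriv σ (LL m d x j θ) • (0 : E m d →L[ℝ] E m d →L[ℝ] ℝ) +
          ((deriv (deriv σ) (LL m d x j θ)) • LL m d x j).smulRight (LL m d x j)) θ :=
      ((hdσ' _).comp_hasFDerivAt θ (LL m d x j).hasFDerivAt).fun_smul (hasFDerivAt_const (LL m d x j) _)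
    have ht1 := ((LA m d j).hasFDerivAt).fun_smul hw
    have ht2 : HasFDerivAt (fun ϑ : E m d => σ (LL m d x j ϑ) • LA m d j)
        (σ (LL m d x j θ) • (0 : E m d →L[ℝ] E m d →L[ℝ] ℝ) +
          ((deriv σ (LL m d x j θ)) • LL m d x j).smulRight (LA m d j)) θ :=
      ((hdσ _).comp_hasFDerivAt θ (LL m d x j).hasFDerivAt).fun_smul (hasFDerivAt_const (LA m d j) _)
    exact ht1.add ht2
  have hsum := HasFDerivAt.fun_sum (fun j (_ : j ∈ Finset.univ) => hj j)
  exact (hsum.const_smul c).add_const (LD m d)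

lemma F2_apply (c : ℝ) (σ : ℝ → ℝ) (x : EuclideanSpace ℝ (Fin d)) (θ u v : E m d) :
    F2 c σ x θ u v = c * ∑ j : Fin m,
      (LA m d j θ * (deriv (deriv σ) (LL m d x j θ) * LL m d x j u * LL m d x j v) +
       LA m d j u * (deriv σ (LL m d x j θ) * LL m d x j v) +
       deriv σ (LL m d x j θ) * LL m d x j u * LA m d j v) := by
  set_option synthInstance.maxHeartbeats 1000000 in
  set_option maxHeartbeats 1000000 in
  simp only [F2, ContinuousLinearMap.smul_apply, ContinuousLinearMap.sum_apply,
    ContinuousLinearMap.add_apply, ContinuousLinearMap.smulRight_apply,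
    ContinuousLinearMap.zero_apply, smul_eq_mul, Finset.mul_sum, mul_zero, zero_add, add_zero,
    zero_mul, mul_add]

noncomputable def rj (j : Fin m) (u : E m d) : ℝ :=
  Real.sqrt ((u (Sum.inl j)) ^ 2 + (∑ i : Fin d, (u (Sum.inr (Sum.inl (j, i)))) ^ 2) +
    (u (Sum.inr (Sum.inr (Sum.inl j)))) ^ 2)

lemma rj_nonneg (j : Fin m) (u : E m d) : 0 ≤ rj j u := Real.sqrt_nonneg _

lemma sq_sum_nonneg (j : Fin m) (u : E m d) :
    0 ≤ (u (Sum.inl j)) ^ 2 + (∑ i : Fin d, (u (Sum.inr (Sum.inl (j, i)))) ^ 2) +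
      (u (Sum.inr (Sum.inr (Sum.inl j)))) ^ 2 := by
  positivity

lemma abs_LA_le (j : Fin m) (u : E m d) : |LA m d j u| ≤ rj j u := by
  have : |u (Sum.inl j)| = Real.sqrt ((u (Sum.inl j)) ^ 2) := (Real.sqrt_sq_eq_abs _).symm
  rw [show LA m d j u = u (Sum.inl j) from rfl, this]
  apply Real.sqrt_le_sqrt
  have h1 : (0:ℝ) ≤ ∑ i : Fin d, (u (Sum.inr (Sum.inl (j, i)))) ^ 2 :=
    Finset.sum_nonneg fun _ _ => sq_nonneg _
  nlinarith [sq_nonneg (u (Sum.inr (Sum.inr (Sum.inl j))))]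

lemma abs_LL_le (x : EuclideanSpace ℝ (Fin d)) (hx : ‖x‖ ≤ 1) (j : Fin m) (u : E m d) :
    |LL m d x j u| ≤ 2 * rj j u := by
  have hxs : (∑ i : Fin d, (x i) ^ 2) ≤ 1 := by
    have h := EuclideanSpace.norm_eq x
    have h0 : ∀ i, ‖x i‖ ^ 2 = (x i) ^ 2 := fun i => by rw [Real.norm_eq_abs, sq_abs]
    have h2 : ‖x‖ ^ 2 = ∑ i, (x i) ^ 2 := by
      rw [h, Real.sq_sqrt (Finset.sum_nonneg fun _ _ => sq_nonneg _)]
      exact Finset.sum_congr rfl fun i _ => h0 i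
    nlinarith [norm_nonneg x]
  set b : Fin d → ℝ := fun i => u (Sum.inr (Sum.inl (j, i))) with hb
  have hbs : (0:ℝ) ≤ ∑ i, b i ^ 2 := Finset.sum_nonneg fun _ _ => sq_nonneg _
  have hcs : (∑ i : Fin d, x i * b i) ^ 2 ≤ (∑ i, x i ^ 2) * ∑ i, b i ^ 2 :=
    Finset.sum_mul_sq_le_sq_mul_sq _ _ _
  have h1 : |∑ i : Fin d, x i * b i| ≤ rj j u := by
    apply Real.abs_le_sqrt
    calc (∑ i : Fin d, x i * b i) ^ 2 ≤ (∑ i, x i ^ 2) * ∑ i, b i ^ 2 := hcs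
      _ ≤ ∑ i, b i ^ 2 := by nlinarith
      _ ≤ _ := by nlinarith [sq_nonneg (u (Sum.inl j)), sq_nonneg (u (Sum.inr (Sum.inr (Sum.inl j))))]
  have h2 : |u (Sum.inr (Sum.inr (Sum.inl j)))| ≤ rj j u := by
    apply Real.abs_le_sqrt
    nlinarith [sq_nonneg (u (Sum.inl j)), hbs]
  rw [LL_apply]
  calc |(∑ i : Fin d, x i * b i) + u (Sum.inr (Sum.inr (Sum.inl j)))|
      ≤ |∑ i : Fin d, x i * b i| + |u (Sum.inr (Sum.inr (Sum.inl j)))| := abs_add_le _ _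
    _ ≤ 2 * rj j u := by linarith

lemma sum_rj_mul_le (u v : E m d) :
    ∑ j : Fin m, rj j u * rj j v ≤ ‖u‖ * ‖v‖ := by
  have key : ∀ w : E m d, Real.sqrt (∑ j : Fin m,
      ((w (Sum.inl j)) ^ 2 + (∑ i : Fin d, (w (Sum.inr (Sum.inl (j, i)))) ^ 2) +
        (w (Sum.inr (Sum.inr (Sum.inl j)))) ^ 2)) ≤ ‖w‖ := by
    intro w
    rw [EuclideanSpace.norm_eq]
    apply Real.sqrt_le_sqrt
    have : ∑ idx, ‖w idx‖ ^ 2 = ∑ idx, (w idx) ^ 2 :=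
      Finset.sum_congr rfl fun idx _ => by rw [Real.norm_eq_abs, sq_abs]
    rw [this, Fintype.sum_sum_type, Fintype.sum_sum_type, Fintype.sum_sum_type,
      Fintype.sum_prod_type]
    simp only [Finset.univ_unique, Finset.sum_singleton]
    rw [Finset.sum_add_distrib, Finset.sum_add_distrib]
    nlinarith [sq_nonneg (w (Sum.inr (Sum.inr (Sum.inr (default : Unit)))))]
  calc ∑ j : Fin m, rj j u * rj j v
      ≤ Real.sqrt (∑ j, rj j u ^ 2) * Real.sqrt (∑ j, rj j v ^ 2) :=
        Real.sum_mul_le_sqrt_mul_sqrt _ _ _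
    _ ≤ ‖u‖ * ‖v‖ := by
        have e1 : ∀ w : E m d, (∑ j : Fin m, rj j w ^ 2) = ∑ j : Fin m,
            ((w (Sum.inl j)) ^ 2 + (∑ i : Fin d, (w (Sum.inr (Sum.inl (j, i)))) ^ 2) +
              (w (Sum.inr (Sum.inr (Sum.inl j)))) ^ 2) := fun w =>
          Finset.sum_congr rfl fun j _ => Real.sq_sqrt (sq_sum_nonneg j w)
        rw [e1, e1]
        exact mul_le_mul (key u) (key v) (Real.sqrt_nonneg _) (norm_nonneg _)

lemma norm_F2_le {C : ℝ} (hC : 0 < C) {σ : ℝ → ℝ}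
    (hσ' : ∀ y : ℝ, |deriv σ y| ≤ C) (hσ'' : ∀ y : ℝ, |deriv (deriv σ) y| ≤ C)
    {c : ℝ} (hc : 0 ≤ c) {x : EuclideanSpace ℝ (Fin d)} (hx : ‖x‖ ≤ 1)
    {θ : E m d} (hθ : ∀ idx, |θ idx| ≤ C) :
    ‖F2 c σ x θ‖ ≤ (4 * C ^ 2 + 4 * C) * c := by
  have hK : 0 ≤ (4 * C ^ 2 + 4 * C) * c := by positivity
  apply ContinuousLinearMap.opNorm_le_bound _ hK
  intro u
  apply ContinuousLinearMap.opNorm_le_bound _ (by positivity)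
  intro v
  rw [F2_apply, Real.norm_eq_abs, abs_mul, abs_of_nonneg hc]
  have hterm : ∀ j : Fin m,
      |LA m d j θ * (deriv (deriv σ) (LL m d x j θ) * LL m d x j u * LL m d x j v) +
       LA m d j u * (deriv σ (LL m d x j θ) * LL m d x j v) +
       deriv σ (LL m d x j θ) * LL m d x j u * LA m d j v| ≤
      (4 * C ^ 2 + 4 * C) * (rj j u * rj j v) := by
    intro j
    have hAθ : |LA m d j θ| ≤ C := hθ _
    have hAu := abs_LA_le j u
    have hAv := abs_LA_le j v
    have hLu := abs_LL_le x hx j u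
    have hLv := abs_LL_le x hx j v
    have hru := rj_nonneg j u
    have hrv := rj_nonneg j v
    have hs' := hσ' (LL m d x j θ)
    have hs'' := hσ'' (LL m d x j θ)
    have e1 : |LA m d j θ * (deriv (deriv σ) (LL m d x j θ) * LL m d x j u * LL m d x j v)|
        ≤ C * (C * (2 * rj j u) * (2 * rj j v)) := by
      rw [abs_mul, abs_mul, abs_mul]
      gcongr <;> positivity
    have e2 : |LA m d j u * (deriv σ (LL m d x j θ) * LL m d x j v)|
        ≤ rj j u * (C * (2 * rj j v)) := by
      rw [abs_mul, abs_mul]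
      gcongr <;> positivity
    have e3 : |deriv σ (LL m d x j θ) * LL m d x j u * LA m d j v|
        ≤ C * (2 * rj j u) * rj j v := by
      rw [abs_mul, abs_mul]
      gcongr <;> positivity
    calc |_ + _ + _| ≤ _ := abs_add_three _ _ _
      _ ≤ C * (C * (2 * rj j u) * (2 * rj j v)) + rj j u * (C * (2 * rj j v)) +
          C * (2 * rj j u) * rj j v := by linarith
      _ = (4 * C ^ 2 + 4 * C) * (rj j u * rj j v) := by ring
  calc c * |∑ j : Fin m, _| ≤ c * ∑ j : Fin m,
        ((4 * C ^ 2 + 4 * C) * (rj j u * rj j v)) := by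
        apply mul_le_mul_of_nonneg_left _ hc
        exact (Finset.abs_sum_le_sum_abs _ _).trans (Finset.sum_le_sum fun j _ => hterm j)
    _ = c * ((4 * C ^ 2 + 4 * C) * ∑ j : Fin m, rj j u * rj j v) := by
        rw [Finset.mul_sum, Finset.mul_sum, Finset.mul_sum]
    _ ≤ c * ((4 * C ^ 2 + 4 * C) * (‖u‖ * ‖v‖)) := by
        have := sum_rj_mul_le u v
        apply mul_le_mul_of_nonneg_left _ hc
        apply mul_le_mul_of_nonneg_left this (by positivity)
    _ = (4 * C ^ 2 + 4 * C) * c * ‖u‖ * ‖v‖ := by ring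

end NetHess

open NetHess in
/-- The second Fréchet derivative (with respect to all parameters, in the Euclidean
norm) of the one-hidden-layer network output `θ ↦ u_θ(x)` is `O(1/√m)`, uniformly
over bounded parameters and `‖x‖ ≤ 1`, with a constant depending only on `C` and `d`. -/
theorem network_hessian_bound (d : ℕ) (hd : 1 ≤ d) (C : ℝ) (hC : 0 < C)
    (σ : ℝ → ℝ) (hσ : ContDiff ℝ 2 σ)
    (hσ' : ∀ y : ℝ, |deriv σ y| ≤ C)
    (hσ'' : ∀ y : ℝ, |deriv (deriv σ) y| ≤ C) :
    ∃ K : ℝ, 0 < K ∧ ∀ m : ℕ, 1 ≤ m →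
      ∀ x : EuclideanSpace ℝ (Fin d), ‖x‖ ≤ 1 →
      ∀ θ : EuclideanSpace ℝ (Fin m ⊕ (Fin m × Fin d) ⊕ Fin m ⊕ Unit),
        (∀ idx, |θ idx| ≤ C) →
        ‖fderiv ℝ (fderiv ℝ
            (fun ϑ : EuclideanSpace ℝ (Fin m ⊕ (Fin m × Fin d) ⊕ Fin m ⊕ Unit) =>
              (1 / Real.sqrt m) *
                (∑ j : Fin m, ϑ (Sum.inl j) *
                  σ ((∑ i : Fin d, ϑ (Sum.inr (Sum.inl (j, i))) * x i) +
                    ϑ (Sum.inr (Sum.inr (Sum.inl j))))) +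
                ϑ (Sum.inr (Sum.inr (Sum.inr ()))))) θ‖ ≤ K / Real.sqrt m := by
  refine ⟨4 * C ^ 2 + 4 * C, by nlinarith, ?_⟩
  intro m hm x hx θ hθ
  have hc : (0:ℝ) ≤ 1 / Real.sqrt m := by positivity
  have hfun : (fun ϑ : EuclideanSpace ℝ (Fin m ⊕ (Fin m × Fin d) ⊕ Fin m ⊕ Unit) =>
      (1 / Real.sqrt m) *
        (∑ j : Fin m, ϑ (Sum.inl j) *
          σ ((∑ i : Fin d, ϑ (Sum.inr (Sum.inl (j, i))) * x i) +
            ϑ (Sum.inr (Sum.inr (Sum.inl j))))) +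
        ϑ (Sum.inr (Sum.inr (Sum.inr ())))) = net (m := m) (d := d) (1 / Real.sqrt m) σ x := by
    funext ϑ
    have hswap : ∀ j : Fin m, (∑ i : Fin d, ϑ (Sum.inr (Sum.inl (j, i))) * x i) =
        ∑ i : Fin d, x i * ϑ (Sum.inr (Sum.inl (j, i))) :=
      fun j => Finset.sum_congr rfl fun i _ => mul_comm _ _
    simp only [net, LL_apply, hswap]
    rfl
  rw [hfun]
  have h1 : fderiv ℝ (net (m := m) (d := d) (1 / Real.sqrt m) σ x) =
      F1 (m := m) (d := d) (1 / Real.sqrt m) σ x :=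
    funext fun ϑ => (hasFDerivAt_net (m := m) (d := d) hσ _ x ϑ).fderiv
  rw [h1, (hasFDerivAt_F1 (m := m) (d := d) hσ _ x θ).fderiv]
  calc ‖F2 (m := m) (d := d) (1 / Real.sqrt m) σ x θ‖ ≤ (4 * C ^ 2 + 4 * C) * (1 / Real.sqrt m) :=
      norm_F2_le hC hσ' hσ'' hc hx hθ
    _ = (4 * C ^ 2 + 4 * C) / Real.sqrt m := by rw [mul_one_div]
end
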